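/- In any associative unital k-algebra containing elements T_1,...,T_n satisfying the type-A braid relations (T_i T_{i+1} T_i = T_{i+1} T_i T_{i+1}, and T_i T_j = T_j T_i for |i-j|>1) together with T_1^2 = 0, the element (T_n T_{n-1} ⋯ T_1)^2 equals 0. -/

import Mathlib

/-- The descending product `T_b T_{b-1} ⋯ T_a` (empty when `a > b`). -/
def downProd {A : Type} [Monoid A] (T : ℕ → A) (a b : ℕ) : A :=
  ((List.range' a (b + 1 - a)).reverse.map T).prod

lemma downProd_empty {A : Type} [Monoid A] (T : ℕ → A) (a b : ℕ) (h : b + 1 ≤ a) :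
    downProd T a b = 1 := by
  unfold downProd
  have : b + 1 - a = 0 := by omega
  simp [this]

lemma downProd_single {A : Type} [Monoid A] (T : ℕ → A) (a : ℕ) :
    downProd T a a = T a := by
  unfold downProd
  have : a + 1 - a = 1 := by omega
  simp [this]

lemma downProd_split {A : Type} [Monoid A] (T : ℕ → A) (a c b : ℕ)
    (h1 : a ≤ c + 1) (h2 : c ≤ b) :
    downProd T a b = downProd T (c + 1) b * downProd T a c := by
  unfold downProd
  have hr : List.range' a (c + 1 - a) ++ List.range' (c + 1) (b + 1 - (c + 1))
      = List.range' a (b + 1 - a) := by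
    have := List.range'_append (s := a) (m := c + 1 - a) (n := b + 1 - (c + 1)) (step := 1)
    have e1 : a + 1 * (c + 1 - a) = c + 1 := by omega
    have e2 : c + 1 - a + (b + 1 - (c + 1)) = b + 1 - a := by omega
    rw [e1, e2] at this
    exact this
  rw [← hr, List.reverse_append, List.map_append, List.prod_append]

lemma downProd_peel_top {A : Type} [Monoid A] (T : ℕ → A) (a b : ℕ)
    (h1 : a ≤ b) (h2 : 1 ≤ b) :
    downProd T a b = T b * downProd T a (b - 1) := by
  have := downProd_split T a (b - 1) b (by omega) (by omega)
  have hb : b - 1 + 1 = b := by omega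
  rw [hb] at this
  rw [this, downProd_single]

lemma commute_prod {A : Type} [Monoid A] (x : A) (l : List A)
    (h : ∀ y ∈ l, x * y = y * x) : x * l.prod = l.prod * x := by
  induction l with
  | nil => simp
  | cons y t ih =>
    have hy := h y (by simp)
    have ht := ih (fun z hz => h z (by simp [hz]))
    simp only [List.prod_cons]
    rw [← mul_assoc, hy, mul_assoc, ht, mul_assoc]

lemma commute_downProd {A : Type} [Monoid A] (x : A) (T : ℕ → A) (a b : ℕ)
    (h : ∀ j, a ≤ j → j ≤ b → x * T j = T j * x) :
    x * downProd T a b = downProd T a b * x := by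
  unfold downProd
  apply commute_prod
  intro y hy
  simp only [List.mem_map, List.mem_reverse] at hy
  obtain ⟨j, hj, rfl⟩ := hy
  rw [List.mem_range'_1] at hj
  exact h j hj.1 (by omega)

theorem descending_word_squares_to_zero (k A : Type) [CommRing k] [Ring A] [Algebra k A]
    (n : ℕ) (hn : 1 ≤ n) (T : ℕ → A)
    (hbraid : ∀ i, 1 ≤ i → i + 1 ≤ n →
      T i * T (i + 1) * T i = T (i + 1) * T i * T (i + 1))
    (hcomm : ∀ i j, 1 ≤ i → i + 1 < j → j ≤ n → T i * T j = T j * T i)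
    (hT1 : T 1 ^ 2 = 0) :
    downProd T 1 n ^ 2 = 0 := by
  set D := downProd T 1 n with hD
  -- conjugation: D * T j = T (j-1) * D for 2 ≤ j ≤ n
  have hconj : ∀ j, 2 ≤ j → j ≤ n → D * T j = T (j - 1) * D := by
    intro j hj2 hjn
    -- split D = P * T j * T (j-1) * Q
    have hs1 : D = downProd T j n * downProd T 1 (j - 1) := by
      have := downProd_split T 1 (j - 1) n (by omega) (by omega)
      have hb : j - 1 + 1 = j := by omega
      rw [hb] at this; exact this
    have hs2 : downProd T j n = downProd T (j + 1) n * T j := by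
      have := downProd_split T j j n (by omega) (by omega)
      rw [this, downProd_single]
    have hs3 : downProd T 1 (j - 1) = T (j - 1) * downProd T 1 (j - 2) := by
      have := downProd_peel_top T 1 (j - 1) (by omega) (by omega)
      have hb : j - 1 - 1 = j - 2 := by omega
      rw [hb] at this; exact this
    have hDsplit : D = downProd T (j + 1) n * T j * T (j - 1) * downProd T 1 (j - 2) := by
      rw [hs1, hs2, hs3]; noncomm_ring
    -- Q commutes with T j
    have hQj : T j * downProd T 1 (j - 2) = downProd T 1 (j - 2) * T j := by
      refine commute_downProd (T j) T 1 (j - 2) ?_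
      intro i hi1 hi2
      exact (hcomm i j hi1 (by omega) hjn).symm
    -- P commutes with T (j-1)
    have hPj : T (j - 1) * downProd T (j + 1) n = downProd T (j + 1) n * T (j - 1) := by
      apply commute_downProd
      intro i hi1 hi2
      exact hcomm (j - 1) i (by omega) (by omega) hi2
    -- braid relation at j-1
    have hbr : T j * T (j - 1) * T j = T (j - 1) * T j * T (j - 1) := by
      have := hbraid (j - 1) (by omega) (by omega)
      have hb : j - 1 + 1 = j := by omega
      rw [hb] at this
      exact this.symm
    calc D * T j = downProd T (j + 1) n * (T j * T (j - 1) * (downProd T 1 (j - 2) * T j)) := by rw [hDsplit]; noncomm_ring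
      _ = downProd T (j + 1) n * (T j * T (j - 1) * T j) * downProd T 1 (j - 2) := by rw [← hQj]; noncomm_ring
      _ = downProd T (j + 1) n * (T (j - 1) * T j * T (j - 1)) * downProd T 1 (j - 2) := by rw [hbr]
      _ = (T (j - 1) * downProd T (j + 1) n) * (T j * T (j - 1) * downProd T 1 (j - 2)) := by rw [hPj]; noncomm_ring
      _ = T (j - 1) * D := by rw [hDsplit]; noncomm_ring
  -- sliding: D * downProd T 1 m = downProd T 1 (m-1) * D * T 1
  have hslide : ∀ m, 1 ≤ m → m ≤ n →
      D * downProd T 1 m = downProd T 1 (m - 1) * D * T 1 := by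
    intro m
    induction m with
    | zero => omega
    | succ m ih =>
      intro h1 h2
      rcases Nat.eq_or_lt_of_le h1 with h | h
      · -- m + 1 = 1
        have hm : m = 0 := by omega
        subst hm
        rw [downProd_single, downProd_empty T 1 0 (by omega)]
        simp
      · have hm1 : 1 ≤ m := by omega
        have hpeel : downProd T 1 (m + 1) = T (m + 1) * downProd T 1 m := by
          have := downProd_peel_top T 1 (m + 1) (by omega) (by omega)
          simpa using this
        have hc := hconj (m + 1) (by omega) h2
        have hb : m + 1 - 1 = m := by omega
        rw [hb] at hc
        have ihm := ih hm1 (by omega)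
        have hpm : T m * downProd T 1 (m - 1) = downProd T 1 m :=
          (downProd_peel_top T 1 m hm1 hm1).symm
        calc D * downProd T 1 (m + 1) = (D * T (m + 1)) * downProd T 1 m := by
              rw [hpeel]; noncomm_ring
          _ = T m * (D * downProd T 1 m) := by rw [hc]; noncomm_ring
          _ = (T m * downProd T 1 (m - 1)) * D * T 1 := by rw [ihm]; noncomm_ring
          _ = downProd T 1 (m + 1 - 1) * D * T 1 := by rw [hpm]; simp
  have hslide_n := hslide n hn le_rfl
  have hDT1 : D * T 1 = downProd T 2 n * (T 1 * T 1) := by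
    have := downProd_split T 1 1 n (by omega) hn
    rw [downProd_single] at this
    rw [hD, this]; noncomm_ring
  have hT1' : T 1 * T 1 = 0 := by rw [← sq]; exact hT1
  calc D ^ 2 = D * downProd T 1 n := by rw [sq, hD]
    _ = downProd T 1 (n - 1) * (D * T 1) := by rw [hslide_n]; noncomm_ring
    _ = downProd T 1 (n - 1) * (downProd T 2 n * (T 1 * T 1)) := by rw [hDT1]
    _ = 0 := by rw [hT1']; noncomm_ring
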